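/- Let Λ be a finite-dimensional k-algebra with a nondegenerate associative bilinear form ⟨-,-⟩_Λ, and let G be a finite group acting on Λ by k-algebra automorphisms. Then the bilinear form on the skew group algebra ΛG defined by ⟨λ ⊗ g, λ' ⊗ g'⟩ = ⟨λ, g(λ')⟩_Λ if gg' = e and 0 otherwise is associative, i.e. ⟨x, yz⟩ = ⟨xy, z⟩ for all x, y, z ∈ ΛG. -/

import Mathlib

/-- The multiplication of the skew group algebra `ΛG`, modeled on the vector space of
functions `G → Λ` (the element `λ ⊗ g` being `Pi.single g λ`), where the finite group `G`
acts on `Λ` via `ρ : G →* (Λ ≃ₐ[k] Λ)`.  It is the bilinear extension of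
`(λ ⊗ g)(λ' ⊗ g') = λ g(λ') ⊗ gg'`. -/
def skewMul {k Λ G : Type*} [Field k] [Ring Λ] [Algebra k Λ] [Group G] [Fintype G]
    (ρ : G →* (Λ ≃ₐ[k] Λ)) (f f' : G → Λ) : G → Λ :=
  fun x => ∑ g : G, f g * ρ g (f' (g⁻¹ * x))

/-- The bilinear form on the skew group algebra `ΛG` which is the bilinear extension of
`⟨λ ⊗ g, λ' ⊗ g'⟩ = ⟨λ, g(λ')⟩_Λ` if `gg' = e` and `0` otherwise. -/
def skewForm {k Λ G : Type*} [Field k] [Ring Λ] [Algebra k Λ] [Group G] [Fintype G]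
    (ρ : G →* (Λ ≃ₐ[k] Λ)) (B : Λ → Λ → k) (f f' : G → Λ) : k :=
  ∑ g : G, B (f g) (ρ g (f' g⁻¹))

/-- If `Λ` is a finite-dimensional `k`-algebra with a nondegenerate
associative bilinear form `B`, and the finite group `G` acts on `Λ` by `k`-algebra
automorphisms, then the bilinear form on `ΛG` given by
`⟨λ ⊗ g, λ' ⊗ g'⟩ = ⟨λ, g(λ')⟩` if `gg' = e` and `0` otherwise is associative. -/
theorem stmt_1 (k Λ G : Type*) [Field k] [Ring Λ] [Algebra k Λ] [FiniteDimensional k Λ]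
    [Group G] [Fintype G] [DecidableEq G]
    (ρ : G →* (Λ ≃ₐ[k] Λ)) (B : Λ → Λ → k)
    -- `B` is bilinear
    (hadd_l : ∀ x x' y : Λ, B (x + x') y = B x y + B x' y)
    (hsmul_l : ∀ (c : k) (x y : Λ), B (c • x) y = c * B x y)
    (hadd_r : ∀ x y y' : Λ, B x (y + y') = B x y + B x y')
    (hsmul_r : ∀ (c : k) (x y : Λ), B x (c • y) = c * B x y)
    -- `B` is associative
    (hassoc : ∀ x y z : Λ, B (x * y) z = B x (y * z))
    -- `B` is nondegenerate
    (hnd : ∀ x : Λ, (∀ y : Λ, B x y = 0) → x = 0) :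
    -- the form on `ΛG` takes the stated values on elements `λ ⊗ g`
    (∀ (g g' : G) (a b : Λ), skewForm ρ B (Pi.single g a) (Pi.single g' b) =
      if g * g' = 1 then B a (ρ g b) else 0) ∧
    -- and it is associative: ⟨x, yz⟩ = ⟨xy, z⟩ for all x, y, z in ΛG
    (∀ x y z : G → Λ,
      skewForm ρ B (skewMul ρ x y) z = skewForm ρ B x (skewMul ρ y z)) := by

  have hB0l : ∀ y : Λ, B 0 y = 0 := by
    intro y
    have h := hadd_l 0 0 y
    rw [add_zero] at h
    exact left_eq_add.mp h
  have hB0r : ∀ x : Λ, B x 0 = 0 := by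
    intro x
    have h := hadd_r x 0 0
    rw [add_zero] at h
    exact left_eq_add.mp h
  have hsum_l : ∀ (s : Finset G) (f : G → Λ) (y : Λ),
      B (∑ i ∈ s, f i) y = ∑ i ∈ s, B (f i) y := by
    intro s f y
    induction s using Finset.induction_on with
    | empty => simpa using hB0l y
    | insert _ _ hni ih => rw [Finset.sum_insert hni, Finset.sum_insert hni, hadd_l, ih]
  have hsum_r : ∀ (s : Finset G) (x : Λ) (f : G → Λ),
      B x (∑ i ∈ s, f i) = ∑ i ∈ s, B x (f i) := by
    intro s x f
    induction s using Finset.induction_on with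
    | empty => simpa using hB0r x
    | insert _ _ hni ih => rw [Finset.sum_insert hni, Finset.sum_insert hni, hadd_r, ih]
  constructor
  · intro g g' a b
    unfold skewForm
    rw [Finset.sum_eq_single g]
    · rw [Pi.single_eq_same]
      by_cases h : g * g' = 1
      · rw [if_pos h, inv_eq_of_mul_eq_one_right h, Pi.single_eq_same]
      · rw [if_neg h, Pi.single_eq_of_ne, map_zero, hB0r]
        intro hc
        exact h (by rw [← hc, mul_inv_cancel])
    · intro h _ hne
      rw [Pi.single_eq_of_ne hne, hB0l]
    · intro h
      exact absurd (Finset.mem_univ g) h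
  · intro x y z
    unfold skewForm skewMul
    have lhs : ∀ g : G, B (∑ h : G, x h * ρ h (y (h⁻¹ * g))) (ρ g (z g⁻¹))
        = ∑ h : G, B (x h) (ρ h (y (h⁻¹ * g)) * ρ g (z g⁻¹)) := by
      intro g
      rw [hsum_l]
      exact Finset.sum_congr rfl fun h _ => hassoc _ _ _
    have rhs : ∀ h : G, B (x h) (ρ h (∑ u : G, y u * ρ u (z (u⁻¹ * h⁻¹))))
        = ∑ u : G, B (x h) (ρ h (y u) * ρ (h * u) (z (u⁻¹ * h⁻¹))) := by
      intro h
      rw [map_sum, hsum_r]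
      refine Finset.sum_congr rfl fun u _ => ?_
      rw [map_mul, map_mul ρ]
      rfl
    simp_rw [lhs, rhs]
    rw [Finset.sum_comm]
    refine Finset.sum_congr rfl fun h _ => ?_
    rw [← Equiv.sum_comp (Equiv.mulLeft h)]
    refine Finset.sum_congr rfl fun u _ => ?_
    simp [mul_inv_rev]
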